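/- Let A be the adjacency matrix of a signed graph on n ≥ 2 vertices whose underlying graph is a tree and whose characteristic polynomial is irreducible over ℚ. If B is the adjacency matrix of a signed graph on n vertices with det(xI−B)=det(xI−A) and det(xI−(J−I−B))=det(xI−(J−I−A)), then the underlying graph of B is a tree. -/

import Mathlib

open Matrix Polynomial

/-- The adjacency matrix of a signed graph: a symmetric integer matrix with zero
diagonal and all entries in `{-1, 0, 1}`. -/
def IsSignedAdjMatrix {n : ℕ} (A : Matrix (Fin n) (Fin n) ℤ) : Prop :=
  A.IsSymm ∧ (∀ i, A i i = 0) ∧ ∀ i j, A i j = -1 ∨ A i j = 0 ∨ A i j = 1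

section Charpoly

variable {m : Type*} [Fintype m] [DecidableEq m] {R : Type*} [CommRing R]

lemma my_charpoly_conj (U V N : Matrix m m R) (h : U * V = 1) :
    (U * N * V).charpoly = N.charpoly := by
  have hmap : ∀ (P Q : Matrix m m R), (P * Q).map (C : R → R[X]) = P.map C * Q.map C := by
    intro P Q
    ext i j
    simp [Matrix.mul_apply, Matrix.map_apply, map_sum]
  have hone : (1 : Matrix m m R).map (C : R → R[X]) = 1 := by
    ext i j
    by_cases hij : i = j <;> simp [Matrix.map_apply, Matrix.one_apply, hij]
  have hcomm : ∀ (P : Matrix m m R[X]), P * Matrix.scalar m (X : R[X])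
      = Matrix.scalar m (X : R[X]) * P := by
    intro P
    ext i j
    simp [Matrix.scalar_apply, Matrix.mul_diagonal, Matrix.diagonal_mul, mul_comm]
  have hcm : charmatrix (U * N * V) = U.map C * charmatrix N * V.map C := by
    rw [charmatrix, charmatrix]
    simp only [RingHom.mapMatrix_apply]
    have hscal : U.map (C : R → R[X]) * (Matrix.scalar m (X : R[X])) * V.map C
        = Matrix.scalar m (X : R[X]) := by
      rw [hcomm, mul_assoc, ← hmap, h, hone, mul_one]
    rw [mul_sub, sub_mul, hscal, ← hmap, ← hmap]
  have hdet : (U.map (C : R → R[X])).det * (V.map C).det = 1 := by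
    rw [← det_mul, ← hmap, h, hone, det_one]
  rw [Matrix.charpoly, Matrix.charpoly, hcm, det_mul, det_mul]
  ring_nf
  calc (U.map (C : R → R[X])).det * (charmatrix N).det * (V.map C).det
      = (charmatrix N).det * ((U.map (C : R → R[X])).det * (V.map C).det) := by ring
    _ = (charmatrix N).det := by rw [hdet, mul_one]

end Charpoly

set_option maxHeartbeats 1000000 in
/-- trace of the square of a real symmetric matrix equals sum of squares of charpoly roots -/
lemma trace_sq_eq_roots {k : ℕ} (M : Matrix (Fin k) (Fin k) ℝ) (hM : M.IsHermitian) :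
    (M * M).trace = ((M.charpoly.roots.map (· ^ 2)).sum) := by
  classical
  set U : Matrix (Fin k) (Fin k) ℝ := (hM.eigenvectorUnitary : Matrix (Fin k) (Fin k) ℝ) with hU
  set d : Fin k → ℝ := RCLike.ofReal ∘ hM.eigenvalues with hd
  have hUU : U * star U = 1 := (Matrix.mem_unitaryGroup_iff).mp (hM.eigenvectorUnitary).2
  have hUU' : star U * U = 1 := (Matrix.mem_unitaryGroup_iff').mp (hM.eigenvectorUnitary).2
  have hspec : M = U * Matrix.diagonal d * star U := hM.spectral_theorem
  have hchar : M.charpoly = (Matrix.diagonal d).charpoly := by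
    conv_lhs => rw [hspec]
    exact my_charpoly_conj U (star U) _ hUU
  have hdiagchar : (Matrix.diagonal d).charpoly = ∏ i, (X - C (d i)) := by
    rw [Matrix.charpoly_of_upperTriangular _ (Matrix.blockTriangular_diagonal d)]
    simp
  have hroots : M.charpoly.roots = Finset.univ.val.map d := by
    rw [hchar, hdiagchar]
    have : ∏ i, (X - C (d i)) = ((Finset.univ.val.map d).map (fun a => X - C a)).prod := by
      rw [Multiset.map_map]
      rfl
    rw [this, Polynomial.roots_multiset_prod_X_sub_C]
  have htr : (M * M).trace = ∑ i, d i ^ 2 := by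
    conv_lhs => rw [hspec]
    have : U * Matrix.diagonal d * star U * (U * Matrix.diagonal d * star U)
        = U * (Matrix.diagonal d * Matrix.diagonal d) * star U := by
      calc U * Matrix.diagonal d * star U * (U * Matrix.diagonal d * star U)
          = U * Matrix.diagonal d * (star U * U) * Matrix.diagonal d * star U := by
            noncomm_ring
        _ = U * (Matrix.diagonal d * Matrix.diagonal d) * star U := by
            rw [hUU', mul_one]; noncomm_ring
    rw [this, Matrix.trace_mul_comm, ← mul_assoc, hUU', one_mul, diagonal_mul_diagonal,
      Matrix.trace_diagonal]
    exact Finset.sum_congr rfl fun i _ => (sq (d i)).symm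
  rw [htr, hroots, Multiset.map_map]
  rfl

section Part2
lemma my_trace_sq_eq_of_charpoly {k : ℕ} (A B : Matrix (Fin k) (Fin k) ℤ)
    (hA : A.IsSymm) (hB : B.IsSymm) (h : B.charpoly = A.charpoly) :
    (B * B).trace = (A * A).trace := by
  have herm : ∀ (M : Matrix (Fin k) (Fin k) ℤ), M.IsSymm →
      (M.map (Int.castRingHom ℝ)).IsHermitian := by
    intro M hM
    ext i j
    simp only [conjTranspose_apply, Matrix.map_apply, star_trivial]
    exact congrArg _ (hM.apply i j)
  have htr : ∀ (M : Matrix (Fin k) (Fin k) ℤ),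
      (((M * M).trace : ℤ) : ℝ) = ((M.map (Int.castRingHom ℝ)) * (M.map (Int.castRingHom ℝ))).trace := by
    intro M
    rw [← Matrix.map_mul]
    simp [Matrix.trace, Matrix.diag, Matrix.map_apply]
  have hch : (B.map (Int.castRingHom ℝ)).charpoly = (A.map (Int.castRingHom ℝ)).charpoly := by
    rw [Matrix.charpoly_map, Matrix.charpoly_map, h]
  have heq := trace_sq_eq_roots (B.map (Int.castRingHom ℝ)) (herm B hB)
  rw [hch] at heq
  rw [← trace_sq_eq_roots (A.map (Int.castRingHom ℝ)) (herm A hA)] at heq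
  have : (((B * B).trace : ℤ) : ℝ) = (((A * A).trace : ℤ) : ℝ) := by
    rw [htr, htr, heq]
  exact_mod_cast this

end Part2

section Part3
open Finset
/-- trace of square counts twice the edges of the underlying graph. -/
lemma my_trace_sq_count {k : ℕ} (M : Matrix (Fin k) (Fin k) ℤ) (hM : IsSignedAdjMatrix M) :
    (M * M).trace
      = 2 * (((SimpleGraph.fromRel fun i j : Fin k => M i j ≠ 0).edgeSet.ncard : ℕ) : ℤ) := by
  classical
  obtain ⟨hsymm, hdiag, hval⟩ := hM
  have hadj : ∀ i j, (SimpleGraph.fromRel fun i j : Fin k => M i j ≠ 0).Adj i j ↔ M i j ≠ 0 := by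
    intro i j
    rw [SimpleGraph.fromRel_adj]
    constructor
    · rintro ⟨hne, h | h⟩
      · exact h
      · rw [← hsymm.apply i j]; exact h
    · intro h
      refine ⟨fun hij => h (hij ▸ hdiag i), Or.inl h⟩
  have key : ∀ i j, M i j * M j i
      = if (SimpleGraph.fromRel fun i j : Fin k => M i j ≠ 0).Adj i j then 1 else 0 := by
    intro i j
    rw [hsymm.apply i j]
    simp only [hadj i j]
    rcases hval i j with h | h | h <;> rw [h] <;> norm_num
  have hsum : (M * M).trace = ∑ p ∈ (univ : Finset (Fin k × Fin k)),
      if (SimpleGraph.fromRel fun i j : Fin k => M i j ≠ 0).Adj p.1 p.2 then (1 : ℤ) else 0 := by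
    rw [← Finset.univ_product_univ, Finset.sum_product]
    rw [Matrix.trace]
    refine Finset.sum_congr rfl fun i _ => ?_
    rw [Matrix.diag_apply, Matrix.mul_apply]
    exact Finset.sum_congr rfl fun j _ => key i j
  rw [hsum, Finset.sum_boole]
  have h2 := SimpleGraph.two_mul_card_edgeFinset
    (G := SimpleGraph.fromRel fun i j : Fin k => M i j ≠ 0)
  have h3 : (SimpleGraph.fromRel fun i j : Fin k => M i j ≠ 0).edgeSet.ncard
      = (SimpleGraph.fromRel fun i j : Fin k => M i j ≠ 0).edgeFinset.card :=
    Set.ncard_eq_toFinset_card' _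
  rw [h3]
  exact_mod_cast h2.symm
end Part3

section Part4
open SimpleGraph Finset

lemma my_conn_card_le {V : Type*} [Fintype V] (G : SimpleGraph V) (hG : G.Connected) :
    Fintype.card V ≤ G.edgeSet.ncard + 1 := by
  classical
  obtain ⟨root⟩ := hG.nonempty
  have hreach : ∀ w : V, ∃ p : G.Walk w root, p.length = G.dist w root :=
    fun w => (hG.preconnected w root).exists_walk_length_eq_dist
  choose p hp using hreach
  set f : V → Sym2 V := fun w => if h : w = root then s(root, root) else
      ((p w).firstDart (SimpleGraph.Walk.not_nil_of_ne h)).edge with hf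
  have hdistpos : ∀ w : V, w ≠ root → 0 < G.dist w root :=
    fun w hw => (hG.preconnected w root).pos_dist_of_ne hw
  have hmem : ∀ w ∈ ({root}ᶜ : Finset V), f w ∈ G.edgeSet.toFinset := by
    intro w hw
    rw [Finset.mem_compl, Finset.mem_singleton] at hw
    rw [hf]
    simp only [dif_neg hw]
    rw [Set.mem_toFinset]
    exact ((p w).firstDart _).edge_mem
  have hsnd : ∀ (a b : V) (ha : a ≠ root), ((p a).firstDart
      (SimpleGraph.Walk.not_nil_of_ne ha)).snd = b → G.dist b root + 1 ≤ G.dist a root := by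
    intro a b ha hab
    have hnil : ¬ (p a).Nil := SimpleGraph.Walk.not_nil_of_ne ha
    have hb : (p a).getVert 1 = b := hab
    have h1 : G.dist b root ≤ ((p a).tail.copy hb rfl).length :=
      SimpleGraph.dist_le ((p a).tail.copy hb rfl)
    have h2 : ((p a).tail.copy hb rfl).length + 1 = (p a).length := by
      rw [SimpleGraph.Walk.length_copy]
      exact SimpleGraph.Walk.length_tail_add_one hnil
    have h3 := hp a
    omega
  have hinj : Set.InjOn f (({root}ᶜ : Finset V) : Set V) := by
    intro a ha b hb hfab
    simp only [Finset.coe_compl, Finset.coe_singleton, Set.mem_compl_iff,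
      Set.mem_singleton_iff] at ha hb
    by_contra hab
    rw [hf] at hfab
    simp only [dif_neg ha, dif_neg hb] at hfab
    rw [SimpleGraph.dart_edge_eq_iff] at hfab
    rcases hfab with h | h
    · exact hab (congrArg (fun d => d.toProd.1) h)
    · have h1 : ((p a).firstDart (SimpleGraph.Walk.not_nil_of_ne ha)).snd = b := by
        rw [h]; rfl
      have h2 : ((p b).firstDart (SimpleGraph.Walk.not_nil_of_ne hb)).snd = a := by
        have := congrArg (fun d => d.toProd.1) h
        simpa using this.symm
      have := hsnd a b ha h1
      have := hsnd b a hb h2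
      omega
  have hcard := Finset.card_le_card_of_injOn f hmem hinj
  rw [Finset.card_compl, Finset.card_singleton] at hcard
  have h4 : G.edgeSet.toFinset.card = G.edgeSet.ncard := (Set.ncard_eq_toFinset_card' _).symm
  have h5 : 1 ≤ Fintype.card V := Fintype.card_pos_iff.mpr ⟨root⟩
  omega

lemma my_isTree_of_connected_card {V : Type*} [Fintype V] (G : SimpleGraph V)
    (hG : G.Connected) (hcard : G.edgeSet.ncard + 1 = Fintype.card V) : G.IsTree := by
  classical
  refine ⟨hG, ?_⟩
  by_contra hac
  obtain ⟨v, c, hc⟩ : ∃ (v : V) (c : G.Walk v v), c.IsCycle := by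
    simpa [SimpleGraph.IsAcyclic] using hac
  have hne : c.edges ≠ [] := by
    intro h
    have h3 := hc.three_le_length
    have : c.edges.length = c.length := SimpleGraph.Walk.length_edges c
    rw [h] at this
    simp at this
    omega
  obtain ⟨e, he⟩ := List.exists_mem_of_ne_nil _ hne
  revert he
  induction e using Sym2.ind with
  | _ x y =>
  intro he
  have hadj : G.Adj x y := c.adj_of_mem_edges he
  have hreach : (G \ SimpleGraph.fromEdgeSet {s(x, y)}).Reachable x y :=
    (SimpleGraph.adj_and_reachable_delete_edges_iff_exists_cycle.mpr ⟨v, c, hc, he⟩).2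
  set G' := G \ SimpleGraph.fromEdgeSet {s(x, y)} with hG'
  have hpre : G'.Preconnected := by
    intro a b
    obtain ⟨q⟩ := hG.preconnected a b
    induction q with
    | nil => exact SimpleGraph.Reachable.refl _
    | @cons a m b hadj2 q ih =>
      refine SimpleGraph.Reachable.trans ?_ ih
      by_cases hxy : s(a, m) = s(x, y)
      · rw [Sym2.eq_iff] at hxy
        rcases hxy with ⟨rfl, rfl⟩ | ⟨rfl, rfl⟩
        · exact hreach
        · exact hreach.symm
      · refine SimpleGraph.Adj.reachable ?_
        rw [hG', SimpleGraph.sdiff_adj]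
        refine ⟨hadj2, ?_⟩
        rw [SimpleGraph.fromEdgeSet_adj]
        rintro ⟨hmem, -⟩
        exact hxy (Set.mem_singleton_iff.mp hmem)
  have hconn' : G'.Connected := by
    have := hG.nonempty
    exact ⟨hpre⟩
  have hedge' : G'.edgeSet = G.edgeSet \ {s(x, y)} := by
    rw [hG']
    rw [SimpleGraph.edgeSet_sdiff, SimpleGraph.edgeSet_fromEdgeSet,
      SimpleGraph.edgeSet_sdiff_sdiff_isDiag]
  have hememb : s(x, y) ∈ G.edgeSet := hadj
  have hncard : G'.edgeSet.ncard = G.edgeSet.ncard - 1 := by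
    rw [hedge']
    exact Set.ncard_diff_singleton_of_mem hememb
  have hpos : 0 < G.edgeSet.ncard := by
    rw [Set.ncard_pos (Set.toFinite _)]
    exact ⟨_, hememb⟩
  have hle := my_conn_card_le G' hconn'
  omega

end Part4

section Part5
open SimpleGraph

lemma my_adj_iff {k : ℕ} (M : Matrix (Fin k) (Fin k) ℤ) (hsymm : M.IsSymm)
    (hdiag : ∀ i, M i i = 0) (i j : Fin k) :
    (SimpleGraph.fromRel fun i j : Fin k => M i j ≠ 0).Adj i j ↔ M i j ≠ 0 := by
  rw [SimpleGraph.fromRel_adj]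
  constructor
  · rintro ⟨hne, h | h⟩
    · exact h
    · rw [← hsymm.apply i j]; exact h
  · intro h
    refine ⟨fun hij => h (hij ▸ hdiag i), Or.inl h⟩

lemma my_connected_of_irreducible {k : ℕ} (hk : 1 ≤ k) (M : Matrix (Fin k) (Fin k) ℤ)
    (hM : IsSignedAdjMatrix M)
    (hirr : Irreducible (M.charpoly.map (Int.castRingHom ℚ))) :
    (SimpleGraph.fromRel fun i j : Fin k => M i j ≠ 0).Connected := by
  classical
  obtain ⟨hsymm, hdiag, -⟩ := hM
  set G := SimpleGraph.fromRel fun i j : Fin k => M i j ≠ 0 with hG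
  have : Nonempty (Fin k) := Fin.pos_iff_nonempty.mp hk
  rw [SimpleGraph.connected_iff]
  refine ⟨?_, this⟩
  by_contra hpre
  rw [SimpleGraph.Preconnected] at hpre
  push_neg at hpre
  obtain ⟨u, v, hnr⟩ := hpre
  set P : Fin k → Prop := fun x => G.Reachable u x with hP
  have hPu : P u := SimpleGraph.Reachable.refl u
  have hPv : ¬ P v := hnr
  set e : {x // P x} ⊕ {x // ¬ P x} ≃ Fin k := Equiv.sumCompl P with he
  have hzero : ∀ (i : {x // P x}) (j : {x // ¬ P x}), M i.1 j.1 = 0 := by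
    intro i j
    by_contra h0
    have hadj : G.Adj i.1 j.1 := (my_adj_iff M hsymm hdiag _ _).mpr h0
    exact j.2 (SimpleGraph.Reachable.trans i.2 hadj.reachable)
  set M11 : Matrix {x // P x} {x // P x} ℤ := Matrix.of fun i j => M i.1 j.1 with hM11
  set M21 : Matrix {x // ¬ P x} {x // P x} ℤ := Matrix.of fun i j => M i.1 j.1 with hM21
  set M22 : Matrix {x // ¬ P x} {x // ¬ P x} ℤ := Matrix.of fun i j => M i.1 j.1 with hM22
  have hblock : Matrix.reindex e.symm e.symm M = Matrix.fromBlocks M11 0 M21 M22 := by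
    ext i j
    cases i with
    | inl i =>
      cases j with
      | inl j => simp [Matrix.reindex_apply, Matrix.submatrix_apply, he, hM11]
      | inr j =>
        simp [Matrix.reindex_apply, Matrix.submatrix_apply, he, hzero i j]
    | inr i =>
      cases j with
      | inl j => simp [Matrix.reindex_apply, Matrix.submatrix_apply, he, hM21]
      | inr j => simp [Matrix.reindex_apply, Matrix.submatrix_apply, he, hM22]
  have hcp : M.charpoly = M11.charpoly * M22.charpoly := by
    rw [← Matrix.charpoly_reindex e.symm M, hblock, Matrix.charpoly_fromBlocks_zero₁₂]
  have hfac : M.charpoly.map (Int.castRingHom ℚ)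
      = (M11.charpoly.map (Int.castRingHom ℚ)) * (M22.charpoly.map (Int.castRingHom ℚ)) := by
    rw [hcp, Polynomial.map_mul]
  rcases hirr.isUnit_or_isUnit hfac with hu | hu
  · have hdeg : (M11.charpoly.map (Int.castRingHom ℚ)).natDegree = Fintype.card {x // P x} := by
      rw [(Matrix.charpoly_monic M11).natDegree_map, Matrix.charpoly_natDegree_eq_dim]
    have hz := Polynomial.natDegree_eq_zero_of_isUnit hu
    have hpos : 0 < Fintype.card {x // P x} := Fintype.card_pos_iff.mpr ⟨⟨u, hPu⟩⟩
    omega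
  · have hdeg : (M22.charpoly.map (Int.castRingHom ℚ)).natDegree = Fintype.card {x // ¬ P x} := by
      rw [(Matrix.charpoly_monic M22).natDegree_map, Matrix.charpoly_natDegree_eq_dim]
    have hz := Polynomial.natDegree_eq_zero_of_isUnit hu
    have hpos : 0 < Fintype.card {x // ¬ P x} := Fintype.card_pos_iff.mpr ⟨⟨v, hPv⟩⟩
    omega

end Part5

theorem stmt17 {n : ℕ} (hn : 2 ≤ n)
    (A : Matrix (Fin n) (Fin n) ℤ) (hA : IsSignedAdjMatrix A)
    (hAtree : (SimpleGraph.fromRel (fun i j : Fin n => A i j ≠ 0)).IsTree)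
    (hirr : Irreducible (A.charpoly.map (Int.castRingHom ℚ)))
    (B : Matrix (Fin n) (Fin n) ℤ) (hB : IsSignedAdjMatrix B)
    (h1 : B.charpoly = A.charpoly)
    (h2 : ((Matrix.of fun _ _ => (1 : ℤ)) - 1 - B).charpoly
        = ((Matrix.of fun _ _ => (1 : ℤ)) - 1 - A).charpoly) :
    (SimpleGraph.fromRel (fun i j : Fin n => B i j ≠ 0)).IsTree := by
  classical
  have hconnB : (SimpleGraph.fromRel fun i j : Fin n => B i j ≠ 0).Connected :=
    my_connected_of_irreducible (by omega) B hB (by rw [h1]; exact hirr)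
  have htr := my_trace_sq_eq_of_charpoly A B hA.1 hB.1 h1
  have hcA := my_trace_sq_count A hA
  have hcB := my_trace_sq_count B hB
  have hedges : (SimpleGraph.fromRel fun i j : Fin n => B i j ≠ 0).edgeSet.ncard
      = (SimpleGraph.fromRel fun i j : Fin n => A i j ≠ 0).edgeSet.ncard := by
    have : (((SimpleGraph.fromRel fun i j : Fin n => B i j ≠ 0).edgeSet.ncard : ℕ) : ℤ)
        = (((SimpleGraph.fromRel fun i j : Fin n => A i j ≠ 0).edgeSet.ncard : ℕ) : ℤ) := by
      have e1 : 2 * (((SimpleGraph.fromRel fun i j : Fin n => B i j ≠ 0).edgeSet.ncard : ℕ) : ℤ)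
          = 2 * (((SimpleGraph.fromRel fun i j : Fin n => A i j ≠ 0).edgeSet.ncard : ℕ) : ℤ) := by
        rw [← hcA, ← hcB, htr]
      linarith
    exact_mod_cast this
  have hAcard : (SimpleGraph.fromRel fun i j : Fin n => A i j ≠ 0).edgeSet.ncard + 1 = n := by
    have h := hAtree.card_edgeFinset
    rw [Fintype.card_fin] at h
    rw [Set.ncard_eq_toFinset_card']
    exact h
  refine my_isTree_of_connected_card _ hconnB ?_
  rw [Fintype.card_fin, hedges, hAcard]
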